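/- Let D₁, D₂ be t-structures with D₁^{≤0} ⊆ D₂^{≤0}, H = D₁^{≥1} ∩ D₂^{≤0}, and let U^{≤0}, U^{≥1} ⊆ H satisfy Hom(U^{≤0}, U^{≥1}) = 0 and the decomposition property in H. Then U^{≤0} = (D₁^{≤0} ∗ U^{≤0}) ∩ H and U^{≥1} = (U^{≥1} ∗ D₂^{≥1}) ∩ H. -/

import Mathlib

open CategoryTheory Category Limits Pretriangulated Triangulated ZeroObject

variable {C : Type*} [Category C] [Preadditive C] [HasZeroObject C] [HasShift C ℤ]
  [∀ (n : ℤ), (shiftFunctor C n).Additive] [Pretriangulated C] [IsTriangulated C]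

/-- `ExtStar S T` is the class of objects `Z` fitting in a distinguished triangle
`A → Z → B → A⟦1⟧` with `A ∈ S` and `B ∈ T`. -/
def ExtStar (S T : C → Prop) : C → Prop := fun Z =>
  ∃ (A B : C) (_ : S A) (_ : T B) (f : A ⟶ Z) (g : Z ⟶ B) (h : B ⟶ A⟦(1 : ℤ)⟧),
    Triangle.mk f g h ∈ distTriang C

/-- Any zero object belongs to `t.le 0` and to `t.ge 1`. -/
lemma tstructure_zero_mem (t : TStructure C) : t.le 0 (0 : C) ∧ t.ge 1 (0 : C) := by
  obtain ⟨X, Y, hX, hY, f, g, h, mem⟩ := t.exists_triangle_zero_one (0 : C)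
  have h2 : IsZero ((Triangle.mk f g h).obj₂) := isZero_zero C
  have hiso : IsIso ((Triangle.mk f g h).mor₃) :=
    (Triangle.isZero₂_iff_isIso₃ _ mem).1 h2
  have hX1 : t.le 0 (X⟦(1 : ℤ)⟧) :=
    t.le_monotone (show (-1 : ℤ) ≤ 0 by omega) _ (t.le_shift 0 1 (-1) (by omega) X hX)
  have hinv : inv ((Triangle.mk f g h).mor₃) = 0 := t.zero' _ hX1 hY
  have hzY : IsZero Y := by
    have hid := IsIso.hom_inv_id ((Triangle.mk f g h).mor₃)
    rw [hinv, comp_zero] at hid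
    rw [IsZero.iff_id_eq_zero]
    exact hid.symm
  have hzX : IsZero X := Triangle.isZero₁_of_isZero₂₃ _ mem h2 hzY
  exact ⟨ObjectProperty.prop_of_iso (t.le 0) hzX.isoZero hX, ObjectProperty.prop_of_iso (t.ge 1) hzY.isoZero hY⟩

/-- If `(U^{≤0}, U^{≥1})` is a t-structure on `H = D₁^{≥1} ∩ D₂^{≤0}`, then
`U^{≤0} = (D₁^{≤0} ∗ U^{≤0}) ∩ H` and `U^{≥1} = (U^{≥1} ∗ D₂^{≥1}) ∩ H`. -/
theorem stmt_8 (t₁ t₂ : TStructure C) (ht : t₁.le 0 ≤ t₂.le 0)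
    (U₀ U₁ : C → Prop)
    (hU₀C : ObjectProperty.IsClosedUnderIsomorphisms U₀) (hU₁C : ObjectProperty.IsClosedUnderIsomorphisms U₁)
    (hU₀ : ∀ X, U₀ X → t₁.ge 1 X ∧ t₂.le 0 X)
    (hU₁ : ∀ X, U₁ X → t₁.ge 1 X ∧ t₂.le 0 X)
    (horth : ∀ (A B : C) (f : A ⟶ B), U₀ A → U₁ B → f = 0)
    (hdec : ∀ (X : C), (t₁.ge 1 X ∧ t₂.le 0 X) →
      ∃ (Y Z : C) (_ : U₀ Y) (_ : U₁ Z)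
        (f : Y ⟶ X) (g : X ⟶ Z) (h : Z ⟶ Y⟦(1 : ℤ)⟧),
        Triangle.mk f g h ∈ distTriang C) :
    U₀ = (fun X => ExtStar (t₁.le 0) U₀ X ∧ (t₁.ge 1 X ∧ t₂.le 0 X)) ∧
    U₁ = (fun X => ExtStar U₁ (t₂.ge 1) X ∧ (t₁.ge 1 X ∧ t₂.le 0 X)) := by
  constructor
  · funext X
    apply propext
    constructor
    · intro hX
      exact ⟨⟨0, X, (tstructure_zero_mem t₁).1, hX, 0, 𝟙 X, 0,
        contractible_distinguished₁ X⟩, hU₀ X hX⟩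
    · rintro ⟨⟨A, B, hA, hB, f, g, h, mem⟩, hX1, hX2⟩
      -- the map `f : A ⟶ X` is zero since `A ∈ t₁.le 0` and `X ∈ t₁.ge 1`
      have hf : f = 0 := t₁.zero' f hA hX1
      -- hence `mor₃` admits a section `σ : A⟦1⟧ ⟶ B`
      obtain ⟨σ, hσ⟩ := Triangle.coyoneda_exact₁ _ mem (𝟙 (A⟦(1 : ℤ)⟧))
        (by change _ ≫ f⟦(1 : ℤ)⟧' = 0; rw [hf, Functor.map_zero, comp_zero])
      -- the section is itself zero since `A⟦1⟧ ∈ t₁.le 0` and `B ∈ t₁.ge 1`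
      have hA1 : t₁.le 0 (A⟦(1 : ℤ)⟧) :=
        t₁.le_monotone (show (-1 : ℤ) ≤ 0 by omega) _ (t₁.le_shift 0 1 (-1) (by omega) A hA)
      have hσ0 : σ = 0 := t₁.zero' σ hA1 (hU₀ B hB).1
      have hzA1 : IsZero (A⟦(1 : ℤ)⟧) := by
        rw [IsZero.iff_id_eq_zero, hσ, hσ0, zero_comp]; rfl
      -- therefore `A` is zero and `g : X ⟶ B` is an isomorphism
      have hzA : IsZero A := by
        have := (shiftFunctor C (-1 : ℤ)).map_isZero hzA1
        exact this.of_iso ((shiftEquiv C (1 : ℤ)).unitIso.app A)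
      have : IsIso ((Triangle.mk f g h).mor₂) :=
        (Triangle.isZero₁_iff_isIso₂ _ mem).1 hzA
      exact ObjectProperty.prop_of_iso U₀ (asIso ((Triangle.mk f g h).mor₂)).symm hB
  · funext X
    apply propext
    constructor
    · intro hX
      exact ⟨⟨X, 0, hX, (tstructure_zero_mem t₂).2, 𝟙 X, 0, 0,
        contractible_distinguished X⟩, hU₁ X hX⟩
    · rintro ⟨⟨A, B, hA, hB, f, g, h, mem⟩, hX1, hX2⟩
      -- the map `g : X ⟶ B` is zero since `X ∈ t₂.le 0` and `B ∈ t₂.ge 1`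
      have hg : g = 0 := t₂.zero' g hX2 hB
      -- hence `mor₃` admits a retraction `ρ : A⟦1⟧ ⟶ B`
      obtain ⟨ρ, hρ⟩ := Triangle.yoneda_exact₃ _ mem (𝟙 B) (by change g ≫ _ = 0; rw [hg, comp_id])
      -- the retraction is zero since `A⟦1⟧ ∈ t₂.le 0` and `B ∈ t₂.ge 1`
      have hA1 : t₂.le 0 (A⟦(1 : ℤ)⟧) :=
        t₂.le_monotone (show (-1 : ℤ) ≤ 0 by omega) _
          (t₂.le_shift 0 1 (-1) (by omega) A (hU₁ A hA).2)
      have hρ0 : ρ = 0 := t₂.zero' ρ hA1 hB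
      have hzB : IsZero B := by
        rw [IsZero.iff_id_eq_zero, hρ, hρ0, comp_zero]; rfl
      have : IsIso ((Triangle.mk f g h).mor₁) :=
        (Triangle.isZero₃_iff_isIso₁ _ mem).1 hzB
      exact ObjectProperty.prop_of_iso U₁ (@asIso _ _ _ _ ((Triangle.mk f g h).mor₁) this) hA
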